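/- Let Ω ⊆ ℝⁿ be closed or open, and let (r_i)_{i ∈ ℕ} be a sequence of positive reals converging to some ρ > 0. If Ω is r_i-convex for every i ∈ ℕ, then Ω is ρ-convex. -/

import Mathlib

open Filter Metric Set
open scoped Topology RealInnerProductSpace NNReal

/-- A set `Ω` is `r`-convex if for all `x, y ∈ Ω` the intersection of all closed balls of
radius `r` containing both `x` and `y` (taken to be everything if no such ball exists)
is contained in `Ω`. -/
def RConvex {n : ℕ} (r : ℝ) (Ω : Set (EuclideanSpace ℝ (Fin n))) : Prop :=
  ∀ x ∈ Ω, ∀ y ∈ Ω,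
    {z : EuclideanSpace ℝ (Fin n) |
      ∀ c : EuclideanSpace ℝ (Fin n),
        x ∈ closedBall c r → y ∈ closedBall c r → z ∈ closedBall c r} ⊆ Ω


lemma aux_shrink {n : ℕ} {x y z c : EuclideanSpace ℝ (Fin n)} {r' ρ : ℝ}
    (hr : r' ≤ ρ)
    (hz : ∀ c, dist x c ≤ ρ → dist y c ≤ ρ → dist z c ≤ ρ)
    (hx : dist x c ≤ r') (hy : dist y c ≤ r') : dist z c ≤ r' := by
  by_cases hzc : z = c
  · simpa [hzc] using dist_nonneg.trans hx
  · have hpos : (0:ℝ) < ‖z - c‖ := by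
      rw [norm_pos_iff]; exact sub_ne_zero.mpr hzc
    set k : ℝ := (ρ - r') / ‖z - c‖ with hk
    have hk0 : 0 ≤ k := div_nonneg (by linarith) hpos.le
    set c' : EuclideanSpace ℝ (Fin n) := c - k • (z - c) with hc'
    have hcc' : dist c c' = ρ - r' := by
      rw [dist_eq_norm]
      have h : c - c' = k • (z - c) := by rw [hc']; abel
      rw [h, norm_smul, Real.norm_eq_abs, abs_of_nonneg hk0, hk,
        div_mul_cancel₀ _ hpos.ne']
    have hzd : dist z c' = dist z c + (ρ - r') := by
      rw [dist_eq_norm, dist_eq_norm]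
      have h : z - c' = (1 + k) • (z - c) := by
        rw [hc', add_smul, one_smul]; abel
      rw [h, norm_smul, Real.norm_eq_abs, abs_of_nonneg (by linarith : (0:ℝ) ≤ 1 + k),
        add_mul, one_mul, hk, div_mul_cancel₀ _ hpos.ne']
    have h1 : dist x c' ≤ ρ := (dist_triangle x c c').trans (by rw [hcc']; linarith)
    have h2 : dist y c' ≤ ρ := (dist_triangle y c c').trans (by rw [hcc']; linarith)
    have := hz c' h1 h2
    rw [hzd] at this
    linarith

lemma aux_dilate {n : ℕ} {x y z c : EuclideanSpace ℝ (Fin n)} {ρ μ : ℝ}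
    (hμ : 0 < μ)
    (hz : ∀ c, dist x c ≤ ρ → dist y c ≤ ρ → dist z c ≤ ρ)
    (hx : dist (z + μ • (x - z)) c ≤ μ * ρ)
    (hy : dist (z + μ • (y - z)) c ≤ μ * ρ) : dist z c ≤ μ * ρ := by
  set c₀ := z + μ⁻¹ • (c - z) with hc₀
  have key : ∀ w : EuclideanSpace ℝ (Fin n),
      dist w c₀ = μ⁻¹ * dist (z + μ • (w - z)) c := by
    intro w
    rw [dist_eq_norm, dist_eq_norm]
    have h : w - c₀ = μ⁻¹ • (z + μ • (w - z) - c) := by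
      rw [hc₀]; match_scalars <;> field_simp <;> ring
    rw [h, norm_smul, Real.norm_eq_abs, abs_of_pos (inv_pos.mpr hμ)]
  have hx0 : dist x c₀ ≤ ρ := by
    rw [key x]
    calc μ⁻¹ * dist (z + μ • (x - z)) c ≤ μ⁻¹ * (μ * ρ) :=
          mul_le_mul_of_nonneg_left hx (inv_pos.mpr hμ).le
      _ = ρ := by field_simp
  have hy0 : dist y c₀ ≤ ρ := by
    rw [key y]
    calc μ⁻¹ * dist (z + μ • (y - z)) c ≤ μ⁻¹ * (μ * ρ) :=
          mul_le_mul_of_nonneg_left hy (inv_pos.mpr hμ).le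
      _ = ρ := by field_simp
  have hz0 := hz c₀ hx0 hy0
  have hkey : dist z c₀ = μ⁻¹ * dist z c := by simpa using key z
  rw [hkey] at hz0
  calc dist z c = μ * (μ⁻¹ * dist z c) := by field_simp
    _ ≤ μ * ρ := mul_le_mul_of_nonneg_left hz0 hμ.le


lemma sq_le_imp {a b : ℝ} (ha : 0 ≤ a) (hb : 0 ≤ b) (h : a ^ 2 ≤ b ^ 2) : a ≤ b := by
  nlinarith

lemma arith1 {u p d r ρ t w : ℝ} (hxsq : u ^ 2 + 2 * p + d ^ 2 ≤ r ^ 2)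
    (ht0 : 0 ≤ t) (ht1 : t ≤ 1) (htR : t * (r ^ 2 - d ^ 2) = ρ ^ 2 - d ^ 2)
    (hρ0 : 0 ≤ ρ) (hw0 : 0 ≤ w)
    (hwsq : w ^ 2 = t ^ 2 * u ^ 2 + 2 * (t * p) + d ^ 2) : w ≤ ρ := by
  apply sq_le_imp hw0 hρ0
  nlinarith [mul_le_mul_of_nonneg_left hxsq ht0,
    mul_nonneg (mul_nonneg ht0 (by linarith : (0:ℝ) ≤ 1 - t)) (sq_nonneg u)]

lemma arith2 {d r ρ s t u R Q D T : ℝ}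
    (hd0 : 0 ≤ d) (hdρ : d ≤ ρ) (hρr : ρ < r)
    (hs0 : 0 ≤ s) (hs1 : s ≤ 1)
    (hu0 : 0 ≤ u) (huR : u ^ 2 ≤ r ^ 2 - d ^ 2)
    (hR2 : R ^ 2 = r ^ 2 - d ^ 2) (hR0 : 0 < R)
    (hQ2 : Q ^ 2 = r ^ 2 - ρ ^ 2) (hQ0 : 0 < Q)
    (ht : t = (ρ ^ 2 - d ^ 2) / (r ^ 2 - d ^ 2))
    (hg : (1 - s) * ρ + (1 - s) * Q + s * R ≤ r)
    (hD : D ≤ ρ + (1 - t) * u)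
    (hT : T ≤ (1 - s) * D + s * u) : T ≤ r := by
  have hρ0 : (0:ℝ) ≤ ρ := hd0.trans hdρ
  have hRd : (0:ℝ) < r ^ 2 - d ^ 2 := by nlinarith
  have ht0 : 0 ≤ t := by rw [ht]; exact div_nonneg (by nlinarith) hRd.le
  have ht1 : t ≤ 1 := by rw [ht, div_le_one hRd]; nlinarith
  have huR' : u ≤ R := sq_le_imp hu0 hR0.le (by linarith)
  have hQR : Q ≤ R := sq_le_imp hQ0.le hR0.le (by nlinarith)
  have h1tR : (1 - t) * R ≤ Q := by
    have h2 : t * (r ^ 2 - d ^ 2) = ρ ^ 2 - d ^ 2 := by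
      rw [ht, div_mul_cancel₀ _ hRd.ne']
    have h : (1 - t) * R * R = Q * Q := by
      linear_combination (1 - t) * hR2 - hQ2 - h2
    refine le_of_mul_le_mul_right ?_ hR0
    calc (1 - t) * R * R = Q * Q := h
      _ ≤ Q * R := mul_le_mul_of_nonneg_left hQR hQ0.le
  have hA : (1 - t) * u ≤ (1 - t) * R := mul_le_mul_of_nonneg_left huR' (by linarith)
  have hB : (1 - s) * D ≤ (1 - s) * (ρ + Q) :=
    mul_le_mul_of_nonneg_left (by linarith) (by linarith)
  have hE : s * u ≤ s * R := mul_le_mul_of_nonneg_left huR' hs0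
  nlinarith

lemma arith0 {d ρ r : ℝ} (hd0 : 0 ≤ d) (hdρ : d ≤ ρ) (hρr : ρ < r) :
    0 < r ^ 2 - d ^ 2 ∧ 0 < r ^ 2 - ρ ^ 2 ∧ 0 ≤ (ρ ^ 2 - d ^ 2) / (r ^ 2 - d ^ 2) ∧
      (ρ ^ 2 - d ^ 2) / (r ^ 2 - d ^ 2) ≤ 1 ∧
      (ρ ^ 2 - d ^ 2) / (r ^ 2 - d ^ 2) * (r ^ 2 - d ^ 2) = ρ ^ 2 - d ^ 2 := by
  have h1 : 0 < r ^ 2 - d ^ 2 := by nlinarith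
  have h2 : 0 < r ^ 2 - ρ ^ 2 := by nlinarith
  refine ⟨h1, h2, div_nonneg (by nlinarith) h1.le, ?_, div_mul_cancel₀ _ h1.ne'⟩
  rw [div_le_one h1]; nlinarith

lemma aux_core {n : ℕ} {x y z m c : EuclideanSpace ℝ (Fin n)} {ρ r d s : ℝ}
    (hm : x + y = m + m)
    (hd : dist x m = d) (hd0 : 0 ≤ d) (hdρ : d ≤ ρ) (hρr : ρ < r)
    (hs0 : 0 ≤ s) (hs1 : s ≤ 1)
    (hz : ∀ c, dist x c ≤ ρ → dist y c ≤ ρ → dist z c ≤ ρ)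
    (hg : (1 - s) * ρ + (1 - s) * Real.sqrt (r ^ 2 - ρ ^ 2)
        + s * Real.sqrt (r ^ 2 - d ^ 2) ≤ r)
    (hxc : dist x c ≤ r) (hyc : dist y c ≤ r) :
    dist (z + s • (m - z)) c ≤ r := by
  have hρ0 : 0 ≤ ρ := hd0.trans hdρ
  have hr0 : 0 < r := lt_of_le_of_lt hρ0 hρr
  set a : EuclideanSpace ℝ (Fin n) := c - m with ha
  set b : EuclideanSpace ℝ (Fin n) := m - x with hb
  have hab1 : c - x = a + b := by rw [ha, hb]; abel
  have hab2 : c - y = a - b := by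
    rw [ha, hb]
    have h : c - m - (m - x) = c + x - (m + m) := by abel
    rw [h, ← hm]; abel
  have hbd : ‖b‖ = d := by rw [hb, ← hd, dist_eq_norm, norm_sub_rev]
  have hu0 : 0 ≤ ‖a‖ := norm_nonneg a
  have hxc' : ‖a + b‖ ≤ r := by rw [← hab1, ← dist_eq_norm, dist_comm]; exact hxc
  have hyc' : ‖a - b‖ ≤ r := by rw [← hab2, ← dist_eq_norm, dist_comm]; exact hyc
  have hxsq : ‖a‖ ^ 2 + 2 * ⟪a, b⟫ + d ^ 2 ≤ r ^ 2 := by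
    have h1 := norm_add_sq_real a b
    have h2 : ‖a + b‖ ^ 2 ≤ r ^ 2 :=
      pow_le_pow_left₀ (norm_nonneg _) hxc' 2
    rw [hbd] at h1; rw [h1] at h2; linarith
  have hysq : ‖a‖ ^ 2 - 2 * ⟪a, b⟫ + d ^ 2 ≤ r ^ 2 := by
    have h1 := norm_sub_sq_real a b
    have h2 : ‖a - b‖ ^ 2 ≤ r ^ 2 :=
      pow_le_pow_left₀ (norm_nonneg _) hyc' 2
    rw [hbd] at h1; rw [h1] at h2; linarith
  obtain ⟨hRd, hQd, ht0', ht1', htR'⟩ := arith0 hd0 hdρ hρr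
  have hR2 : Real.sqrt (r ^ 2 - d ^ 2) ^ 2 = r ^ 2 - d ^ 2 := Real.sq_sqrt hRd.le
  have hR0 : 0 < Real.sqrt (r ^ 2 - d ^ 2) := Real.sqrt_pos.mpr hRd
  have hQ2 : Real.sqrt (r ^ 2 - ρ ^ 2) ^ 2 = r ^ 2 - ρ ^ 2 := Real.sq_sqrt hQd.le
  have hQ0 : 0 < Real.sqrt (r ^ 2 - ρ ^ 2) := Real.sqrt_pos.mpr hQd
  have huR : ‖a‖ ^ 2 ≤ r ^ 2 - d ^ 2 := by linarith
  set t : ℝ := (ρ ^ 2 - d ^ 2) / (r ^ 2 - d ^ 2) with ht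
  have ht0 : 0 ≤ t := ht0'
  have ht1 : t ≤ 1 := ht1'
  have htR : t * (r ^ 2 - d ^ 2) = ρ ^ 2 - d ^ 2 := htR'
  set c' : EuclideanSpace ℝ (Fin n) := m + t • a with hc'
  have hxc'' : dist x c' ≤ ρ := by
    rw [dist_eq_norm]
    have hv : x - c' = -(t • a + b) := by rw [hc', hb]; abel
    rw [hv, norm_neg]
    refine arith1 hxsq ht0 ht1 htR hρ0 (norm_nonneg _) ?_
    rw [norm_add_sq_real, real_inner_smul_left, norm_smul, Real.norm_eq_abs,
      abs_of_nonneg ht0, hbd, mul_pow]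
  have hyc'' : dist y c' ≤ ρ := by
    rw [dist_eq_norm]
    have hv : y - c' = -(t • a - b) := by
      rw [hc', hb]
      have h : y - (m + t • a) = -(t • a) + (y + x - (m + m)) + (m - x) := by abel
      rw [h, ← hm]
      abel
    rw [hv, norm_neg]
    have hysq' : ‖a‖ ^ 2 + 2 * (-⟪a, b⟫) + d ^ 2 ≤ r ^ 2 := by linarith
    refine arith1 hysq' ht0 ht1 htR hρ0 (norm_nonneg _) ?_
    rw [norm_sub_sq_real, real_inner_smul_left, norm_smul, Real.norm_eq_abs,
      abs_of_nonneg ht0, hbd, mul_pow]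
    ring
  have hzc' : dist z c' ≤ ρ := hz c' hxc'' hyc''
  have hc'c : dist c' c = (1 - t) * ‖a‖ := by
    rw [dist_eq_norm]
    have hv : c' - c = -((1 - t) • a) := by rw [hc', ha, sub_smul, one_smul]; abel
    rw [hv, norm_neg, norm_smul, Real.norm_eq_abs,
      abs_of_nonneg (by linarith : (0:ℝ) ≤ 1 - t)]
  have hzc : dist z c ≤ ρ + (1 - t) * ‖a‖ := by
    calc dist z c ≤ dist z c' + dist c' c := dist_triangle z c' c
      _ ≤ ρ + (1 - t) * ‖a‖ := by rw [hc'c]; linarith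
  have hT1 : dist (z + s • (m - z)) c ≤ (1 - s) * dist z c + s * ‖a‖ := by
    rw [dist_eq_norm]
    have hv : z + s • (m - z) - c = (1 - s) • (z - c) + s • (m - c) := by
      match_scalars <;> ring
    rw [hv]
    calc ‖(1 - s) • (z - c) + s • (m - c)‖ ≤ ‖(1 - s) • (z - c)‖ + ‖s • (m - c)‖ :=
          norm_add_le _ _
      _ = (1 - s) * ‖z - c‖ + s * ‖m - c‖ := by
          rw [norm_smul, norm_smul, Real.norm_eq_abs, Real.norm_eq_abs,
            abs_of_nonneg (by linarith : (0:ℝ) ≤ 1 - s), abs_of_nonneg hs0]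
      _ = (1 - s) * dist z c + s * ‖a‖ := by
          rw [← dist_eq_norm, ha, norm_sub_rev]
  exact arith2 hd0 hdρ hρr hs0 hs1 hu0 huR hR2 hR0 hQ2 hQ0 ht hg hzc hT1



/-- Lemma 12: if a closed or open set `Ω ⊆ ℝⁿ` is `rᵢ`-convex for every term of a sequence
of positive reals `rᵢ` converging to `ρ > 0`, then `Ω` is `ρ`-convex. -/
theorem rConvex_of_tendsto {n : ℕ} (Ω : Set (EuclideanSpace ℝ (Fin n)))
    (hΩ : IsClosed Ω ∨ IsOpen Ω)
    (r : ℕ → ℝ) (hrpos : ∀ i, 0 < r i)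
    (ρ : ℝ) (hρ : 0 < ρ) (hlim : Tendsto r atTop (𝓝 ρ))
    (hconv : ∀ i, RConvex (r i) Ω) :
    RConvex ρ Ω := by
  
  by_cases hle : ∃ i, r i ≤ ρ
  · obtain ⟨i, hi⟩ := hle
    intro x hx y hy z hz
    simp only [mem_setOf_eq, mem_closedBall] at hz
    refine hconv i x hx y hy ?_
    simp only [mem_setOf_eq, mem_closedBall]
    intro c hxc hyc
    exact aux_shrink hi hz hxc hyc
  push_neg at hle
  rcases hΩ with hcl | hop
  · -- closed case
    intro x hx y hy z hz
    simp only [mem_setOf_eq, mem_closedBall] at hz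
    by_cases hbig : 2 * ρ < dist x y
    · obtain ⟨i, hi⟩ := (hlim.eventually_lt_const (by linarith : ρ < dist x y / 2)).exists
      refine hconv i x hx y hy ?_
      simp only [mem_setOf_eq, mem_closedBall]
      intro c hxc hyc
      exfalso
      have h1 := dist_triangle x c y
      rw [dist_comm c y] at h1
      have : dist x y ≤ 2 * r i := by linarith [h1, hxc, hyc]
      linarith
    push_neg at hbig
    set m : EuclideanSpace ℝ (Fin n) := midpoint ℝ x y with hmdef
    have hm : x + y = m + m := (midpoint_add_self ℝ x y).symm
    have hxm : dist x m = dist x y / 2 := by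
      rw [hmdef, dist_left_midpoint]
      norm_num
      ring
    have hym : dist y m = dist x y / 2 := by
      rw [hmdef, dist_right_midpoint, dist_comm]
      norm_num
      ring
    set d : ℝ := dist x y / 2 with hddef
    have hd0 : 0 ≤ d := by positivity
    have hdρ : d ≤ ρ := by rw [hddef]; linarith
    have hzm : dist z m ≤ d := aux_shrink hdρ hz (le_of_eq hxm) (le_of_eq hym)
    by_cases hxy : x = y
    · have hd0' : d = 0 := by rw [hddef, hxy]; simp
      have : dist z m ≤ 0 := by rw [← hd0']; exact hzm
      have hzm' : z = m := by
        have := dist_le_zero.mp this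
        exact this
      have hmx : m = x := by rw [hmdef, hxy, midpoint_self]
      rw [hzm', hmx]; exact hx
    have hd0' : 0 < d := by
      rw [hddef]
      have := dist_pos.mpr hxy
      linarith
    by_contra hzΩ
    obtain ⟨ε, hε, hball⟩ := Metric.isOpen_iff.mp hcl.isOpen_compl z hzΩ
    set s : ℝ := min 1 (ε / (2 * d)) with hsdef
    have hs0 : 0 < s := lt_min one_pos (div_pos hε (by linarith))
    have hs1 : s ≤ 1 := min_le_left _ _
    -- the limit of the bound
    have hQ : Tendsto (fun i => Real.sqrt (r i ^ 2 - ρ ^ 2)) atTop (𝓝 0) := by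
      have h1 : Tendsto (fun i => r i ^ 2 - ρ ^ 2) atTop (𝓝 (ρ ^ 2 - ρ ^ 2)) :=
        (hlim.pow 2).sub tendsto_const_nhds
      have h2 := h1.sqrt
      simpa using h2
    have hR : Tendsto (fun i => Real.sqrt (r i ^ 2 - d ^ 2)) atTop
        (𝓝 (Real.sqrt (ρ ^ 2 - d ^ 2))) :=
      ((hlim.pow 2).sub tendsto_const_nhds).sqrt
    have hg : Tendsto (fun i => (1 - s) * ρ + (1 - s) * Real.sqrt (r i ^ 2 - ρ ^ 2)
        + s * Real.sqrt (r i ^ 2 - d ^ 2)) atTop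
        (𝓝 ((1 - s) * ρ + (1 - s) * 0 + s * Real.sqrt (ρ ^ 2 - d ^ 2))) :=
      (tendsto_const_nhds.add ((tendsto_const_nhds.mul hQ))).add (tendsto_const_nhds.mul hR)
    have hL : (1 - s) * ρ + (1 - s) * 0 + s * Real.sqrt (ρ ^ 2 - d ^ 2) < ρ := by
      have h1 : Real.sqrt (ρ ^ 2 - d ^ 2) < ρ := by
        have h2 : ρ ^ 2 - d ^ 2 < ρ ^ 2 := by nlinarith
        calc Real.sqrt (ρ ^ 2 - d ^ 2) < Real.sqrt (ρ ^ 2) :=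
              Real.sqrt_lt_sqrt (by nlinarith) h2
          _ = ρ := Real.sqrt_sq hρ.le
      nlinarith [mul_lt_mul_of_pos_left h1 hs0]
    obtain ⟨i, hgi⟩ := (hg.eventually_lt_const hL).exists
    have hgle : (1 - s) * ρ + (1 - s) * Real.sqrt (r i ^ 2 - ρ ^ 2)
        + s * Real.sqrt (r i ^ 2 - d ^ 2) ≤ r i := (hgi.trans (hle i)).le
    have hz'Ω : z + s • (m - z) ∈ Ω := by
      refine hconv i x hx y hy ?_
      simp only [mem_setOf_eq, mem_closedBall]
      intro c hxc hyc
      exact aux_core hm hxm hd0 hdρ (hle i) hs0.le hs1 hz hgle hxc hyc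
    have hzm' : dist (z + s • (m - z)) z < ε := by
      rw [dist_eq_norm, add_sub_cancel_left, norm_smul, Real.norm_eq_abs,
        abs_of_nonneg hs0.le]
      have h1 : ‖m - z‖ ≤ d := by rw [← dist_eq_norm, dist_comm]; exact hzm
      have h2 : s * ‖m - z‖ ≤ (ε / (2 * d)) * d := by
        apply mul_le_mul (min_le_right _ _) h1 (norm_nonneg _)
        positivity
      have h3 : (ε / (2 * d)) * d = ε / 2 := by field_simp
      rw [h3] at h2
      linarith
    exact hball (mem_ball.mpr hzm') hz'Ω
  · -- open case
    intro x hx y hy z hz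
    simp only [mem_setOf_eq, mem_closedBall] at hz
    obtain ⟨εx, hεx, hbx⟩ := Metric.isOpen_iff.mp hop x hx
    obtain ⟨εy, hεy, hby⟩ := Metric.isOpen_iff.mp hop y hy
    have hμ : Tendsto (fun i => r i / ρ) atTop (𝓝 1) := by
      have := hlim.div_const ρ
      rw [div_self hρ.ne'] at this
      exact this
    have hxlim : Tendsto (fun i => z + (r i / ρ) • (x - z)) atTop (𝓝 x) := by
      have h1 : Tendsto (fun i => z + (r i / ρ) • (x - z)) atTop
          (𝓝 (z + (1 : ℝ) • (x - z))) :=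
        tendsto_const_nhds.add (hμ.smul_const (x - z))
      simpa using h1
    have hylim : Tendsto (fun i => z + (r i / ρ) • (y - z)) atTop (𝓝 y) := by
      have h1 : Tendsto (fun i => z + (r i / ρ) • (y - z)) atTop
          (𝓝 (z + (1 : ℝ) • (y - z))) :=
        tendsto_const_nhds.add (hμ.smul_const (y - z))
      simpa using h1
    have h1 := hxlim.eventually_mem (hop.mem_nhds hx)
    have h2 := hylim.eventually_mem (hop.mem_nhds hy)
    obtain ⟨i, hxi, hyi⟩ := (h1.and h2).exists
    refine hconv i _ hxi _ hyi ?_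
    simp only [mem_setOf_eq, mem_closedBall]
    intro c hxc hyc
    have hri : (r i / ρ) * ρ = r i := by field_simp
    have hd := aux_dilate (div_pos (hrpos i) hρ) hz
      (by rw [hri]; exact hxc) (by rw [hri]; exact hyc)
    rw [hri] at hd
    exact hd
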